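/- Let q ∈ ℕ with q ≥ 2, let 0 < t < 1 and z > 0. Then either z is a fixed point of R_{z,t,q} (i.e., R_{z,t,q}(z) = z, which forces z = 1), or the orbit (R_{z,t,q}ⁿ(z))_{n≥0} converges to a fixed point w* ∈ (0,∞) of R_{z,t,q} satisfying 0 < R'_{z,t,q}(w*) ≤ 1 (i.e., to an attracting or neutral fixed point). -/

import Mathlib

noncomputable section

/-- The renormalization map `R_{z,t,q}(w) = z·((t + w + (q−2)tw)/(1 + (q−1)tw))²`,
viewed as a function of the real variable `w`. -/
def Rmap (z t q : ℝ) (w : ℝ) : ℝ :=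
  z * ((t + w + (q - 2) * t * w) / (1 + (q - 1) * t * w)) ^ 2

namespace RenormAux

variable {q t z w w1 w2 : ℝ}

lemma denom_pos (hq : (2:ℝ) ≤ q) (ht0 : 0 < t) (hw : 0 ≤ w) :
    0 < 1 + (q - 1) * t * w := by
  nlinarith [mul_nonneg (mul_nonneg (show (0:ℝ) ≤ q - 1 by linarith) ht0.le) hw]

lemma num_pos (hq : (2:ℝ) ≤ q) (ht0 : 0 < t) (hw : 0 ≤ w) :
    0 < t + w + (q - 2) * t * w := by
  nlinarith [mul_nonneg (mul_nonneg (show (0:ℝ) ≤ q - 2 by linarith) ht0.le) hw]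

lemma frac_pos (hq : (2:ℝ) ≤ q) (ht0 : 0 < t) (hw : 0 ≤ w) :
    0 < (t + w + (q - 2) * t * w) / (1 + (q - 1) * t * w) :=
  div_pos (num_pos hq ht0 hw) (denom_pos hq ht0 hw)

lemma Rpos (hq : (2:ℝ) ≤ q) (ht0 : 0 < t) (hz : 0 < z) (hw : 0 ≤ w) :
    0 < Rmap z t q w :=
  mul_pos hz (pow_pos (frac_pos hq ht0 hw) 2)

lemma hasDeriv (hq : (2:ℝ) ≤ q) (ht0 : 0 < t) (hw : 0 ≤ w) :
    HasDerivAt (Rmap z t q)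
      (z * (2 * ((t + w + (q - 2) * t * w) / (1 + (q - 1) * t * w)) *
        ((1 - t) * (1 + (q - 1) * t) / (1 + (q - 1) * t * w) ^ 2))) w := by
  have hd : (1 + (q - 1) * t * w) ≠ 0 := ne_of_gt (denom_pos hq ht0 hw)
  have h1 : HasDerivAt (fun x : ℝ => x) 1 w := hasDerivAt_id w
  have h2 : HasDerivAt (fun x : ℝ => (q - 2) * t * x) ((q - 2) * t) w := by
    simpa using (hasDerivAt_id w).const_mul ((q - 2) * t)
  have hN : HasDerivAt (fun x : ℝ => t + x + (q - 2) * t * x) (1 + (q - 2) * t) w := by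
    exact (h1.const_add t).add h2
  have h3 : HasDerivAt (fun x : ℝ => (q - 1) * t * x) ((q - 1) * t) w := by
    simpa using (hasDerivAt_id w).const_mul ((q - 1) * t)
  have hD : HasDerivAt (fun x : ℝ => 1 + (q - 1) * t * x) ((q - 1) * t) w :=
    h3.const_add 1
  have hQ := hN.div hD hd
  have hP := hQ.pow 2
  have hR := hP.const_mul z
  refine hR.congr_deriv ?_
  have h2 : (1 + (q - 1) * t * w) ^ 2 ≠ 0 := pow_ne_zero 2 hd
  simp only [Pi.div_apply, Nat.cast_ofNat, Nat.add_one_sub_one, pow_one]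
  field_simp
  ring

lemma deriv_pos (hq : (2:ℝ) ≤ q) (ht0 : 0 < t) (ht1 : t < 1) (hz : 0 < z) (hw : 0 ≤ w) :
    0 < deriv (Rmap z t q) w := by
  rw [(hasDeriv hq ht0 hw).deriv]
  have h1 := frac_pos hq ht0 hw
  have h2 : (0:ℝ) < (1 - t) * (1 + (q - 1) * t) :=
    mul_pos (by linarith) (by nlinarith [mul_pos (show (0:ℝ) < q - 1 by linarith) ht0])
  have h3 := denom_pos hq ht0 hw
  positivity

lemma Rmono (hq : (2:ℝ) ≤ q) (ht0 : 0 < t) (ht1 : t < 1) (hz : 0 < z)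
    (hw1 : 0 ≤ w1) (h12 : w1 < w2) :
    Rmap z t q w1 < Rmap z t q w2 := by
  have hw2 : 0 ≤ w2 := le_trans hw1 h12.le
  have hf1 := frac_pos hq ht0 hw1
  have hd1 := denom_pos hq ht0 hw1
  have hd2 := denom_pos hq ht0 hw2
  have hf : (t + w1 + (q - 2) * t * w1) / (1 + (q - 1) * t * w1)
      < (t + w2 + (q - 2) * t * w2) / (1 + (q - 1) * t * w2) := by
    rw [div_lt_div_iff₀ hd1 hd2]
    nlinarith [mul_pos (sub_pos.2 h12) (mul_pos (show (0:ℝ) < 1 - t by linarith)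
      (show (0:ℝ) < 1 + (q - 1) * t by nlinarith [mul_pos (show (0:ℝ) < q - 1 by linarith) ht0]))]
  unfold Rmap
  exact mul_lt_mul_of_pos_left (by nlinarith [hf, hf1]) hz

lemma Rbound (hq : (2:ℝ) ≤ q) (ht0 : 0 < t) (hz : 0 < z) (hw : 0 ≤ w) :
    Rmap z t q w ≤ z * (t + (1 + (q - 2) * t) / ((q - 1) * t)) ^ 2 := by
  have hb : (0:ℝ) < (q - 1) * t := by nlinarith
  set c : ℝ := (1 + (q - 2) * t) / ((q - 1) * t) with hc
  have hc0 : 0 ≤ c := div_nonneg (by nlinarith) hb.le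
  have hcw : c * ((q - 1) * t) = 1 + (q - 2) * t := div_mul_cancel₀ _ (ne_of_gt hb)
  have hd := denom_pos hq ht0 hw
  have hfle : (t + w + (q - 2) * t * w) / (1 + (q - 1) * t * w) ≤ t + c := by
    rw [div_le_iff₀ hd]
    have hcw' : c * ((q - 1) * t) * w = (1 + (q - 2) * t) * w := by rw [hcw]
    nlinarith [mul_nonneg (mul_nonneg (mul_nonneg ht0.le ht0.le)
      (show (0:ℝ) ≤ q - 1 by linarith)) hw]
  have hf0 := (frac_pos hq ht0 hw).le
  unfold Rmap
  have : ((t + w + (q - 2) * t * w) / (1 + (q - 1) * t * w)) ^ 2 ≤ (t + c) ^ 2 := by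
    nlinarith
  nlinarith [this]


open Filter Topology in
lemma conclude (hq : (2:ℝ) ≤ q) (ht0 : 0 < t) (ht1 : t < 1) (hz : 0 < z)
    (w : ℕ → ℝ) (hpos : ∀ n, 0 ≤ w n) (hiter : ∀ n, w (n + 1) = Rmap z t q (w n))
    (wstar : ℝ) (hconv : Tendsto w atTop (𝓝 wstar))
    (hne : ∀ n, w n ≠ wstar)
    (hratio : ∀ n, (wstar - w (n + 1)) / (wstar - w n) < 1) :
    0 < wstar ∧ Rmap z t q wstar = wstar ∧
      0 < deriv (Rmap z t q) wstar ∧ deriv (Rmap z t q) wstar ≤ 1 := by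
  have hws0 : 0 ≤ wstar := ge_of_tendsto' hconv hpos
  have H := hasDeriv (z := z) hq ht0 hws0
  have hcont : ContinuousAt (Rmap z t q) wstar := H.continuousAt
  have h1 : Tendsto (fun n => Rmap z t q (w n)) atTop (𝓝 (Rmap z t q wstar)) :=
    hcont.tendsto.comp hconv
  have h2 : Tendsto (fun n => w (n + 1)) atTop (𝓝 wstar) :=
    hconv.comp (tendsto_add_atTop_nat 1)
  have hfix : Rmap z t q wstar = wstar := by
    have he : (fun n => Rmap z t q (w n)) = fun n => w (n + 1) :=
      funext fun n => (hiter n).symm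
    exact tendsto_nhds_unique (he ▸ h1) h2
  have hwpos : 0 < wstar := hfix ▸ Rpos hq ht0 hz hws0
  refine ⟨hwpos, hfix, deriv_pos hq ht0 ht1 hz hws0, ?_⟩
  rw [H.deriv]
  have hslope := hasDerivAt_iff_tendsto_slope.mp H
  have hwt : Tendsto w atTop (𝓝[≠] wstar) :=
    tendsto_nhdsWithin_of_tendsto_nhds_of_eventually_within _ hconv
      (Filter.Eventually.of_forall fun n => by simpa using hne n)
  have hcomp := hslope.comp hwt
  refine le_of_tendsto hcomp (Filter.Eventually.of_forall fun n => ?_)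
  have : slope (Rmap z t q) wstar (w n) = (wstar - w (n + 1)) / (wstar - w n) := by
    rw [slope_def_field, hfix, hiter n]
    rw [show Rmap z t q (w n) - wstar = -(wstar - Rmap z t q (w n)) from by ring,
      show w n - wstar = -(wstar - w n) from by ring, neg_div_neg_eq]
  simp only [Function.comp_apply]
  rw [this]
  exact (hratio n).le

end RenormAux


open Filter Topology RenormAux in
/-- **Lemma (dichotomy for the orbit of the marked point, ferromagnetic case).**
For `q ≥ 2` a natural number, `0 < t < 1`, and `z > 0`: either `z` is a fixed point
of `R_{z,t,q}` (which forces `z = 1`), or the orbit of `z` under `R_{z,t,q}`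
converges to a fixed point `w* ∈ (0,∞)` with `0 < R'_{z,t,q}(w*) ≤ 1`
(an attracting or neutral fixed point). -/
theorem renorm_orbit_dichotomy
    (q : ℕ) (hq : 2 ≤ q) (t : ℝ) (ht0 : 0 < t) (ht1 : t < 1) (z : ℝ) (hz : 0 < z) :
    (Rmap z t q z = z ∧ z = 1) ∨
    (∃ wstar : ℝ, 0 < wstar ∧ Rmap z t q wstar = wstar ∧
      0 < deriv (Rmap z t q) wstar ∧ deriv (Rmap z t q) wstar ≤ 1 ∧
      Filter.Tendsto (fun n : ℕ => (Rmap z t q)^[n] z) Filter.atTop (nhds wstar)) := by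
  have hq' : (2:ℝ) ≤ (q:ℝ) := by exact_mod_cast hq
  set R := Rmap z t (q:ℝ) with hRdef
  set w : ℕ → ℝ := fun n => R^[n] z with hwdef
  have hw0 : w 0 = z := rfl
  have hiter : ∀ n, w (n + 1) = R (w n) := fun n => Function.iterate_succ_apply' R n z
  have hpos : ∀ n, 0 < w n := by
    intro n; induction n with
    | zero => exact hz
    | succ n ih => rw [hiter n]; exact Rpos hq' ht0 hz ih.le
  rcases lt_trichotomy (R z) z with hlt | heq | hgt
  · -- strictly decreasing orbit
    right
    have hstep : ∀ n, w (n + 1) < w n := by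
      intro n; induction n with
      | zero => rw [hiter 0, hw0]; exact hlt
      | succ n ih =>
        have h := Rmono hq' ht0 ht1 hz (hpos (n + 1)).le ih
        rw [← hRdef] at h
        rw [← hiter n, ← hiter (n + 1)] at h
        exact h
    have hanti : StrictAnti w := strictAnti_nat_of_succ_lt hstep
    have hbdd : BddBelow (Set.range w) := ⟨0, by rintro x ⟨n, rfl⟩; exact (hpos n).le⟩
    have hconv : Tendsto w atTop (𝓝 (⨅ n, w n)) := tendsto_atTop_ciInf hanti.antitone hbdd
    set ws := ⨅ n, w n with hws
    have hsep : ∀ n, ws < w n := fun n =>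
      lt_of_le_of_lt (ciInf_le hbdd (n + 1)) (hstep n)
    have hratio : ∀ n, (ws - w (n + 1)) / (ws - w n) < 1 := by
      intro n
      rw [show ws - w (n + 1) = -(w (n + 1) - ws) by ring,
        show ws - w n = -(w n - ws) by ring, neg_div_neg_eq,
        div_lt_one (by linarith [hsep n])]
      linarith [hstep n]
    obtain ⟨h1, h2, h3, h4⟩ := conclude hq' ht0 ht1 hz w (fun n => (hpos n).le) hiter ws hconv
      (fun n => (hsep n).ne') hratio
    exact ⟨ws, h1, h2, h3, h4, hconv⟩
  · -- fixed point: z = 1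
    left
    refine ⟨heq, ?_⟩
    have hd := denom_pos (w := z) hq' ht0 hz.le
    have hn := num_pos (w := z) hq' ht0 hz.le
    have hfrac : ((t + z + ((q:ℝ) - 2) * t * z) / (1 + ((q:ℝ) - 1) * t * z)) ^ 2 = 1 :=
      mul_left_cancel₀ hz.ne' (by simpa [hRdef, Rmap, mul_one] using heq)
    rw [div_pow, div_eq_one_iff_eq (pow_ne_zero 2 hd.ne')] at hfrac
    have hND : t + z + ((q:ℝ) - 2) * t * z = 1 + ((q:ℝ) - 1) * t * z := by
      have hfac : (t + z + ((q:ℝ) - 2) * t * z - (1 + ((q:ℝ) - 1) * t * z)) *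
          (t + z + ((q:ℝ) - 2) * t * z + (1 + ((q:ℝ) - 1) * t * z)) = 0 := by
        linear_combination hfrac
      rcases mul_eq_zero.mp hfac with h | h
      · linarith
      · nlinarith
    have hzz : (1 - t) * (z - 1) = 0 := by linear_combination hND
    rcases mul_eq_zero.mp hzz with h | h
    · linarith
    · linarith
  · -- strictly increasing orbit
    right
    have hstep : ∀ n, w n < w (n + 1) := by
      intro n; induction n with
      | zero => rw [hiter 0, hw0]; exact hgt
      | succ n ih =>
        have h := Rmono hq' ht0 ht1 hz (hpos n).le ih
        rw [← hRdef] at h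
        rw [← hiter n, ← hiter (n + 1)] at h
        exact h
    have hmono : StrictMono w := strictMono_nat_of_lt_succ hstep
    have hbdd : BddAbove (Set.range w) := by
      refine ⟨max z (z * (t + (1 + ((q:ℝ) - 2) * t) / (((q:ℝ) - 1) * t)) ^ 2), ?_⟩
      rintro x ⟨n, rfl⟩
      cases n with
      | zero => exact le_max_left _ _
      | succ n =>
        rw [hiter n]
        exact le_trans (Rbound hq' ht0 hz (hpos n).le) (le_max_right _ _)
    have hconv : Tendsto w atTop (𝓝 (⨆ n, w n)) := tendsto_atTop_ciSup hmono.monotone hbdd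
    set ws := ⨆ n, w n with hws
    have hsep : ∀ n, w n < ws := fun n =>
      lt_of_lt_of_le (hstep n) (le_ciSup hbdd (n + 1))
    have hratio : ∀ n, (ws - w (n + 1)) / (ws - w n) < 1 := by
      intro n
      rw [div_lt_one (by linarith [hsep n])]
      linarith [hstep n]
    obtain ⟨h1, h2, h3, h4⟩ := conclude hq' ht0 ht1 hz w (fun n => (hpos n).le) hiter ws hconv
      (fun n => (hsep n).ne) hratio
    exact ⟨ws, h1, h2, h3, h4, hconv⟩
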